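/- Let γ > 1 and ℓ := 2/(γ−1). For every (V₋, C₋) ∈ ℝ² with 1+V₋ < C₋ < 0, there exists a unique (V₊, C₊) ∈ ℝ² with C₊ < 1+V₊ < 0 such that the pair satisfies the self-similar Rankine–Hugoniot relations. Conversely, for every (V₊, C₊) with C₊ < 1+V₊ < 0 there exists a unique (V₋, C₋) with 1+V₋ < C₋ < 0 such that the pair satisfies the self-similar Rankine–Hugoniot relations. (These are admissible self-similar 1-shocks in the case ξ̄/λ > 0, with left states in S¹₋ := {1+V < C < 0} and right states in S¹₊ := {C < 1+V < 0}.) -/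

import Mathlib

/-- The self-similar Rankine–Hugoniot relations for the 1-d isentropic Euler
system (with `ℓ = 2/(γ−1)`), relating a left state `Pm = (V₋, C₋)` and a right
state `Pp = (V₊, C₊)`. -/
def RH (γ : ℝ) (Pm Pp : ℝ × ℝ) : Prop :=
  |Pm.2| ^ (2 / (γ - 1)) * (1 + Pm.1) = |Pp.2| ^ (2 / (γ - 1)) * (1 + Pp.1) ∧
  |Pm.2| ^ (2 / (γ - 1)) * ((1 + Pm.1) ^ 2 + Pm.2 ^ 2 / γ)
    = |Pp.2| ^ (2 / (γ - 1)) * ((1 + Pp.1) ^ 2 + Pp.2 ^ 2 / γ)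

open Real Set

noncomputable def Fq (γ j ρ : ℝ) : ℝ := j ^ 2 / ρ + ρ ^ γ / γ

lemma rpow_split (γ : ℝ) {x : ℝ} (hx : 0 < x) : x ^ (γ + 1) = x ^ (γ - 1) * x ^ 2 := by
  rw [show γ + 1 = (γ - 1) + (2:ℝ) by ring, Real.rpow_add hx,
    show (2:ℝ) = ((2:ℕ):ℝ) by norm_num, Real.rpow_natCast]

lemma Fq_deriv (γ j : ℝ) (hγ : 1 < γ) {x : ℝ} (hx : 0 < x) :
    HasDerivAt (Fq γ j) (x ^ (γ - 1) - j ^ 2 / x ^ 2) x := by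
  have h1 : HasDerivAt (fun ρ : ℝ => j ^ 2 / ρ) (-(j ^ 2 / x ^ 2)) x := by
    simpa [div_eq_mul_inv, mul_comm, neg_div] using (hasDerivAt_inv hx.ne').const_mul (j ^ 2)
  have h2 : HasDerivAt (fun ρ : ℝ => ρ ^ γ / γ) (γ * x ^ (γ - 1) / γ) x :=
    (Real.hasDerivAt_rpow_const (Or.inl hx.ne')).div_const γ
  have := h1.add h2
  have hγ0 : γ ≠ 0 := by linarith
  exact this.congr_deriv (by rw [mul_div_cancel_left₀ _ hγ0]; ring)

lemma Fq_contOn (γ j : ℝ) (hγ : 1 < γ) {s : Set ℝ} (hs : ∀ x ∈ s, 0 < x) :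
    ContinuousOn (Fq γ j) s := by
  apply ContinuousOn.add
  · exact continuousOn_const.div continuousOn_id fun x hx => (hs x hx).ne'
  · exact (continuousOn_id.rpow_const fun x hx => Or.inl (hs x hx).ne').div_const γ

section core
variable {γ j : ℝ} (hγ : 1 < γ) (hj : j ≠ 0)

lemma spos (hj : j ≠ 0) : (0:ℝ) < (j ^ 2) ^ (γ + 1)⁻¹ :=
  rpow_pos_of_pos (by positivity) _

lemma spow (hγ : 1 < γ) (hj : j ≠ 0) : ((j ^ 2) ^ (γ + 1)⁻¹) ^ (γ + 1) = j ^ 2 :=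
  Real.rpow_inv_rpow (by positivity) (by linarith)

lemma Fq_mono (hγ : 1 < γ) (hj : j ≠ 0) :
    StrictMonoOn (Fq γ j) (Ici ((j ^ 2) ^ (γ + 1)⁻¹)) := by
  set s := (j ^ 2) ^ (γ + 1)⁻¹ with hs
  have hs0 : 0 < s := spos hj
  apply strictMonoOn_of_deriv_pos (convex_Ici s)
  · exact Fq_contOn γ j hγ fun x hx => lt_of_lt_of_le hs0 hx
  · intro x hx
    rw [interior_Ici] at hx
    have hx0 : 0 < x := hs0.trans hx
    rw [(Fq_deriv γ j hγ hx0).deriv]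
    have h1 : j ^ 2 < x ^ (γ + 1) := by
      calc j ^ 2 = s ^ (γ + 1) := (spow hγ hj).symm
      _ < x ^ (γ + 1) := Real.rpow_lt_rpow hs0.le hx (by linarith)
    rw [rpow_split γ hx0] at h1
    have : j ^ 2 / x ^ 2 < x ^ (γ - 1) := by
      rw [div_lt_iff₀ (by positivity)]; linarith
    linarith

lemma Fq_anti (hγ : 1 < γ) (hj : j ≠ 0) :
    StrictAntiOn (Fq γ j) (Ioc 0 ((j ^ 2) ^ (γ + 1)⁻¹)) := by
  set s := (j ^ 2) ^ (γ + 1)⁻¹ with hs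
  have hs0 : 0 < s := spos hj
  apply strictAntiOn_of_deriv_neg (convex_Ioc 0 s)
  · exact Fq_contOn γ j hγ fun x hx => hx.1
  · intro x hx
    rw [interior_Ioc] at hx
    have hx0 : 0 < x := hx.1
    rw [(Fq_deriv γ j hγ hx0).deriv]
    have h1 : x ^ (γ + 1) < j ^ 2 := by
      calc x ^ (γ + 1) < s ^ (γ + 1) := Real.rpow_lt_rpow hx0.le hx.2 (by linarith)
      _ = j ^ 2 := spow hγ hj
    rw [rpow_split γ hx0] at h1
    have : x ^ (γ - 1) < j ^ 2 / x ^ 2 := by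
      rw [lt_div_iff₀ (by positivity)]; linarith
    linarith


lemma lt_s_iff (hγ : 1 < γ) (hj : j ≠ 0) {ρ : ℝ} (hρ : 0 < ρ) :
    ρ ^ (γ + 1) < j ^ 2 ↔ ρ < (j ^ 2) ^ (γ + 1)⁻¹ := by
  have h := Real.rpow_lt_rpow_iff hρ.le (spos (γ := γ) hj).le (show (0:ℝ) < γ + 1 by linarith)
  rw [spow hγ hj] at h
  exact h

lemma s_lt_iff (hγ : 1 < γ) (hj : j ≠ 0) {ρ : ℝ} (hρ : 0 < ρ) :
    j ^ 2 < ρ ^ (γ + 1) ↔ (j ^ 2) ^ (γ + 1)⁻¹ < ρ := by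
  have h := Real.rpow_lt_rpow_iff (spos (γ := γ) hj).le hρ.le (show (0:ℝ) < γ + 1 by linarith)
  rw [spow hγ hj] at h
  exact h

lemma Fq_pos (hγ : 1 < γ) (hj : j ≠ 0) {ρ : ℝ} (hρ : 0 < ρ) : 0 < Fq γ j ρ := by
  have h1 : 0 < j ^ 2 / ρ := by positivity
  have h2 : 0 < ρ ^ γ / γ := by
    have := Real.rpow_pos_of_pos hρ γ
    positivity
  unfold Fq; linarith

lemma core_A (hγ : 1 < γ) (hj : j ≠ 0) {ρ₀ : ℝ} (h0 : 0 < ρ₀) (hlt : ρ₀ ^ (γ + 1) < j ^ 2) :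
    ∃! ρ₁ : ℝ, (0 < ρ₁ ∧ j ^ 2 < ρ₁ ^ (γ + 1)) ∧ Fq γ j ρ₁ = Fq γ j ρ₀ := by
  set s := (j ^ 2) ^ (γ + 1)⁻¹ with hs
  have hs0 : 0 < s := spos hj
  have h0s : ρ₀ < s := (lt_s_iff hγ hj h0).1 hlt
  have hFs : Fq γ j s < Fq γ j ρ₀ :=
    Fq_anti hγ hj ⟨h0, h0s.le⟩ ⟨hs0, le_refl s⟩ h0s
  -- choose M large
  obtain ⟨M, hsM, hFM⟩ : ∃ M, s < M ∧ Fq γ j ρ₀ ≤ Fq γ j M := by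
    refine ⟨max s ((γ * Fq γ j ρ₀) ^ γ⁻¹) + 1, by simp [lt_add_of_le_of_pos, le_max_left], ?_⟩
    set M := max s ((γ * Fq γ j ρ₀) ^ γ⁻¹) + 1 with hM
    have hM0 : 0 < M := by positivity
    have hF0 : 0 < Fq γ j ρ₀ := Fq_pos hγ hj h0
    have hMg : (γ * Fq γ j ρ₀) ^ γ⁻¹ ≤ M := by
      have := le_max_right s ((γ * Fq γ j ρ₀) ^ γ⁻¹); linarith [this]
    have h1 : γ * Fq γ j ρ₀ ≤ M ^ γ := by
      calc γ * Fq γ j ρ₀ = ((γ * Fq γ j ρ₀) ^ γ⁻¹) ^ γ :=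
            (Real.rpow_inv_rpow (by positivity) (by linarith)).symm
        _ ≤ M ^ γ := Real.rpow_le_rpow (by positivity) hMg (by linarith)
    have h2 : Fq γ j ρ₀ ≤ M ^ γ / γ := by
      rw [le_div_iff₀ (by linarith)]; linarith [mul_comm γ (Fq γ j ρ₀)]
    have h3 : 0 < j ^ 2 / M := by positivity
    have h4 : Fq γ j M = j ^ 2 / M + M ^ γ / γ := rfl
    linarith
  have hcont : ContinuousOn (Fq γ j) (Icc s M) :=
    Fq_contOn γ j hγ fun x hx => lt_of_lt_of_le hs0 hx.1
  obtain ⟨ρ₁, hρ₁mem, hρ₁⟩ : ∃ ρ₁ ∈ Icc s M, Fq γ j ρ₁ = Fq γ j ρ₀ := by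
    exact intermediate_value_Icc hsM.le hcont ⟨hFs.le, hFM⟩
  have hρ₁s : s < ρ₁ := by
    rcases eq_or_lt_of_le hρ₁mem.1 with h | h
    · exfalso; rw [← h] at hρ₁; linarith
    · exact h
  have hρ₁0 : 0 < ρ₁ := hs0.trans hρ₁s
  refine ⟨ρ₁, ⟨⟨hρ₁0, (s_lt_iff hγ hj hρ₁0).2 hρ₁s⟩, hρ₁⟩, ?_⟩
  rintro ρ₂ ⟨⟨hρ₂0, hρ₂gt⟩, hFρ₂⟩
  have hρ₂s : s < ρ₂ := (s_lt_iff hγ hj hρ₂0).1 hρ₂gt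
  exact (Fq_mono hγ hj).injOn hρ₂s.le hρ₁s.le (hFρ₂.trans hρ₁.symm)

lemma core_B (hγ : 1 < γ) (hj : j ≠ 0) {ρ₀ : ℝ} (h0 : 0 < ρ₀) (hlt : j ^ 2 < ρ₀ ^ (γ + 1)) :
    ∃! ρ₁ : ℝ, (0 < ρ₁ ∧ ρ₁ ^ (γ + 1) < j ^ 2) ∧ Fq γ j ρ₁ = Fq γ j ρ₀ := by
  set s := (j ^ 2) ^ (γ + 1)⁻¹ with hs
  have hs0 : 0 < s := spos hj
  have h0s : s < ρ₀ := (s_lt_iff hγ hj h0).1 hlt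
  have hFs : Fq γ j s < Fq γ j ρ₀ :=
    Fq_mono hγ hj (le_refl s) h0s.le h0s
  have hF0 : 0 < Fq γ j ρ₀ := Fq_pos hγ hj h0
  set ε := min s (j ^ 2 / Fq γ j ρ₀) with hε
  have hε0 : 0 < ε := lt_min hs0 (by positivity)
  have hεs : ε ≤ s := min_le_left _ _
  have hFε : Fq γ j ρ₀ ≤ Fq γ j ε := by
    have h1 : ε ≤ j ^ 2 / Fq γ j ρ₀ := min_le_right _ _
    have h2 : Fq γ j ρ₀ ≤ j ^ 2 / ε := by
      rw [le_div_iff₀ hε0]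
      calc Fq γ j ρ₀ * ε ≤ Fq γ j ρ₀ * (j ^ 2 / Fq γ j ρ₀) := by
            apply mul_le_mul_of_nonneg_left h1 hF0.le
        _ = j ^ 2 := by field_simp
    have h3 : 0 < ε ^ γ / γ := by
      have := Real.rpow_pos_of_pos hε0 γ; positivity
    have h4 : Fq γ j ε = j ^ 2 / ε + ε ^ γ / γ := rfl
    linarith
  have hcont : ContinuousOn (Fq γ j) (Icc ε s) :=
    Fq_contOn γ j hγ fun x hx => lt_of_lt_of_le hε0 hx.1
  obtain ⟨ρ₁, hρ₁mem, hρ₁⟩ : ∃ ρ₁ ∈ Icc ε s, Fq γ j ρ₁ = Fq γ j ρ₀ := by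
    exact intermediate_value_Icc' hεs hcont ⟨hFs.le, hFε⟩
  have hρ₁s : ρ₁ < s := by
    rcases eq_or_lt_of_le hρ₁mem.2 with h | h
    · exfalso; rw [h] at hρ₁; linarith
    · exact h
  have hρ₁0 : 0 < ρ₁ := hε0.trans_le hρ₁mem.1
  refine ⟨ρ₁, ⟨⟨hρ₁0, (lt_s_iff hγ hj hρ₁0).2 hρ₁s⟩, hρ₁⟩, ?_⟩
  rintro ρ₂ ⟨⟨hρ₂0, hρ₂lt⟩, hFρ₂⟩
  have hρ₂s : ρ₂ < s := (lt_s_iff hγ hj hρ₂0).1 hρ₂lt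
  exact (Fq_anti hγ hj).injOn ⟨hρ₂0, hρ₂s.le⟩ ⟨hρ₁0, hρ₁s.le⟩ (hFρ₂.trans hρ₁.symm)

lemma rho_pow_e (hγ : 1 < γ) {C : ℝ} (hC : C < 0) :
    ((-C) ^ (2/(γ-1))) ^ (γ-1) = C ^ 2 := by
  have h0 : (0:ℝ) < -C := by linarith
  rw [← Real.rpow_mul h0.le, div_mul_cancel₀ 2 (show γ - 1 ≠ 0 by intro h; linarith),
    show (2:ℝ) = ((2:ℕ):ℝ) by norm_num, Real.rpow_natCast, neg_sq]

lemma rho_gamma (hγ : 1 < γ) {C : ℝ} (hC : C < 0) :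
    ((-C) ^ (2/(γ-1))) ^ γ = C ^ 2 * (-C) ^ (2/(γ-1)) := by
  have h0 : (0:ℝ) < -C := by linarith
  have hρ : 0 < (-C) ^ (2/(γ-1)) := rpow_pos_of_pos h0 _
  have key : ((-C) ^ (2/(γ-1))) ^ γ
      = ((-C) ^ (2/(γ-1))) ^ (γ-1) * ((-C) ^ (2/(γ-1))) ^ (1:ℝ) := by
    rw [← Real.rpow_add hρ]; norm_num
  rw [key, Real.rpow_one, rho_pow_e hγ hC]

lemma rho_gp1 (hγ : 1 < γ) {C : ℝ} (hC : C < 0) :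
    ((-C) ^ (2/(γ-1))) ^ (γ+1) = C ^ 2 * ((-C) ^ (2/(γ-1))) ^ 2 := by
  have h0 : (0:ℝ) < -C := by linarith
  have hρ : 0 < (-C) ^ (2/(γ-1)) := rpow_pos_of_pos h0 _
  have key : ((-C) ^ (2/(γ-1))) ^ (γ+1)
      = ((-C) ^ (2/(γ-1))) ^ (γ-1) * ((-C) ^ (2/(γ-1))) ^ ((2:ℕ):ℝ) := by
    rw [← Real.rpow_add hρ]; congr 1; push_cast; ring
  rw [key, Real.rpow_natCast, rho_pow_e hγ hC]

lemma C_of_rho (hγ : 1 < γ) {ρ : ℝ} (hρ : 0 < ρ) :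
    (ρ ^ ((γ-1)/2)) ^ (2/(γ-1)) = ρ := by
  have h1 : γ - 1 ≠ 0 := by intro h; linarith
  rw [← Real.rpow_mul hρ.le,
    show (γ-1)/2 * (2/(γ-1)) = 1 by
      field_simp, Real.rpow_one]

lemma C_inj (hγ : 1 < γ) {C₁ C₂ : ℝ} (h1 : C₁ < 0) (h2 : C₂ < 0)
    (h : (-C₁) ^ (2/(γ-1)) = (-C₂) ^ (2/(γ-1))) : C₁ = C₂ := by
  have h10 : (0:ℝ) < -C₁ := by linarith
  have h20 : (0:ℝ) < -C₂ := by linarith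
  have hne : (2:ℝ)/(γ-1) ≠ 0 := by
    apply div_ne_zero (by norm_num) (show γ - 1 ≠ 0 by intro h'; linarith)
  have e1 : ((-C₁) ^ (2/(γ-1))) ^ (2/(γ-1))⁻¹ = -C₁ := Real.rpow_rpow_inv h10.le hne
  rw [h, Real.rpow_rpow_inv h20.le hne] at e1
  linarith

lemma RH_iff (hγ : 1 < γ) {Vm Cm Vp Cp : ℝ} (hCm : Cm < 0) (hCp : Cp < 0) :
    RH γ (Vm, Cm) (Vp, Cp) ↔
      ((-Cm) ^ (2/(γ-1)) * (1+Vm) = (-Cp) ^ (2/(γ-1)) * (1+Vp) ∧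
        Fq γ ((-Cm) ^ (2/(γ-1)) * (1+Vm)) ((-Cm) ^ (2/(γ-1)))
          = Fq γ ((-Cm) ^ (2/(γ-1)) * (1+Vm)) ((-Cp) ^ (2/(γ-1)))) := by
  have hγ0 : γ ≠ 0 := by intro h; rw [h] at hγ; norm_num at hγ
  have hgm := rho_gamma hγ hCm
  have hgp := rho_gamma hγ hCp
  set ρm := (-Cm) ^ (2/(γ-1)) with hρmdef
  set ρp := (-Cp) ^ (2/(γ-1)) with hρpdef
  have hρm0 : 0 < ρm := rpow_pos_of_pos (by linarith) _
  have hρp0 : 0 < ρp := rpow_pos_of_pos (by linarith) _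
  have hRH : RH γ (Vm, Cm) (Vp, Cp) ↔
      (ρm * (1+Vm) = ρp * (1+Vp) ∧
        ρm * ((1+Vm)^2 + Cm^2/γ) = ρp * ((1+Vp)^2 + Cp^2/γ)) := by
    unfold RH
    rw [show |(Vm, Cm).2| = -Cm from abs_of_neg hCm,
      show |(Vp, Cp).2| = -Cp from abs_of_neg hCp]
  rw [hRH]
  constructor
  · rintro ⟨h1, h2⟩
    refine ⟨h1, ?_⟩
    have e1 : Fq γ (ρm*(1+Vm)) ρm = ρm * ((1+Vm)^2 + Cm^2/γ) := by
      unfold Fq; rw [hgm]; field_simp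
    have e2 : Fq γ (ρm*(1+Vm)) ρp = ρp * ((1+Vp)^2 + Cp^2/γ) := by
      unfold Fq; rw [hgp, h1]; field_simp
    rw [e1, e2, h2]
  · rintro ⟨h1, h2⟩
    refine ⟨h1, ?_⟩
    have e1 : Fq γ (ρm*(1+Vm)) ρm = ρm * ((1+Vm)^2 + Cm^2/γ) := by
      unfold Fq; rw [hgm]; field_simp
    have e2 : Fq γ (ρm*(1+Vm)) ρp = ρp * ((1+Vp)^2 + Cp^2/γ) := by
      unfold Fq; rw [hgp, h1]; field_simp
    rw [← e1, ← e2, h2]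

end core


set_option maxHeartbeats 800000 in
/-- admissible self-similar 1-shocks with `ξ̄/λ > 0`: each left
state in `S¹₋ = {1+V < C < 0}` has a unique right state in `S¹₊ = {C < 1+V < 0}`
satisfying the Rankine–Hugoniot relations, and conversely. -/
theorem stmt_14 (γ : ℝ) (hγ : 1 < γ) :
    (∀ Vm Cm : ℝ, 1 + Vm < Cm → Cm < 0 →
      ∃! Pp : ℝ × ℝ, (Pp.2 < 1 + Pp.1 ∧ 1 + Pp.1 < 0) ∧ RH γ (Vm, Cm) Pp) ∧
    (∀ Vp Cp : ℝ, Cp < 1 + Vp → 1 + Vp < 0 →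
      ∃! Pm : ℝ × ℝ, (1 + Pm.1 < Pm.2 ∧ Pm.2 < 0) ∧ RH γ Pm (Vp, Cp)) := by
  constructor
  · -- left state given, find right state
    intro Vm Cm h1 h2
    have hwm0 : 1 + Vm < 0 := by linarith
    obtain ⟨ρm, hρmdef⟩ : ∃ x, x = (-Cm) ^ (2/(γ-1)) := ⟨_, rfl⟩
    have hρm0 : (0:ℝ) < ρm := by rw [hρmdef]; exact rpow_pos_of_pos (by linarith) _
    obtain ⟨j, hjdef⟩ : ∃ x, x = ρm * (1 + Vm) := ⟨_, rfl⟩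
    have hj : j < 0 := by rw [hjdef]; exact mul_neg_of_pos_of_neg hρm0 hwm0
    have hj0 : j ≠ 0 := ne_of_lt hj
    have hCw : Cm^2 < (1+Vm)^2 := by nlinarith
    have hegp : ρm ^ (γ+1) = Cm^2 * ρm^2 := by rw [hρmdef]; exact rho_gp1 hγ h2
    have hlt : ρm ^ (γ+1) < j^2 := by
      have e2 : j^2 = (1+Vm)^2 * ρm^2 := by rw [hjdef]; ring
      rw [hegp, e2]
      exact mul_lt_mul_of_pos_right hCw (by positivity)
    obtain ⟨ρp, ⟨⟨hρp0, hρpgt⟩, hFeq⟩, huniq⟩ := core_A hγ hj0 hρm0 hlt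
    obtain ⟨Cp, hCpdef⟩ : ∃ x, x = -(ρp ^ ((γ-1)/2)) := ⟨_, rfl⟩
    have hCp : Cp < 0 := by
      have := rpow_pos_of_pos hρp0 ((γ-1)/2)
      rw [hCpdef]; linarith
    have hρpC : (-Cp) ^ (2/(γ-1)) = ρp := by
      rw [hCpdef, neg_neg]; exact C_of_rho hγ hρp0
    obtain ⟨wp, hwpdef⟩ : ∃ x, x = j / ρp := ⟨_, rfl⟩
    have hwp0 : wp < 0 := by rw [hwpdef]; exact div_neg_of_neg_of_pos hj hρp0
    have hjwp : ρp * wp = j := by rw [hwpdef]; field_simp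
    have hegp' : ρp ^ (γ+1) = Cp^2 * ρp^2 := by
      have := rho_gp1 hγ hCp
      rwa [hρpC] at this
    have hsub : wp^2 < Cp^2 := by
      have e2 : j^2 = wp^2 * ρp^2 := by rw [← hjwp]; ring
      have e3 : Cp^2 * ρp^2 = Cp^2 * ρp^2 := rfl
      rw [e2, hegp'] at hρpgt
      exact lt_of_mul_lt_mul_right hρpgt (by positivity)
    have hCpwp : Cp < wp := by nlinarith
    refine ⟨(wp - 1, Cp), ⟨⟨by dsimp only; linarith, by dsimp only; linarith⟩, ?_⟩, ?_⟩
    · rw [RH_iff hγ h2 hCp, ← hρmdef, ← hjdef, hρpC]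
      constructor
      · rw [show 1 + (wp - 1) = wp by ring, hjwp]
      · exact hFeq.symm
    · rintro ⟨V, C⟩ ⟨⟨hc1, hc2⟩, hRHc⟩
      dsimp only at hc1 hc2
      have hC0 : C < 0 := by linarith
      rw [RH_iff hγ h2 hC0, ← hρmdef, ← hjdef] at hRHc
      obtain ⟨ρc, hρcdef⟩ : ∃ x, x = (-C) ^ (2/(γ-1)) := ⟨_, rfl⟩
      rw [← hρcdef] at hRHc
      obtain ⟨hmass, hFc⟩ := hRHc
      have hρ0 : (0:ℝ) < ρc := by rw [hρcdef]; exact rpow_pos_of_pos (by linarith) _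
      have hegc : ρc ^ (γ+1) = C^2 * ρc^2 := by rw [hρcdef]; exact rho_gp1 hγ hC0
      have hCw' : (1+V)^2 < C^2 := by nlinarith
      have hgt : j^2 < ρc ^ (γ+1) := by
        have e2 : j^2 = (1+V)^2 * ρc^2 := by rw [hmass]; ring
        rw [hegc, e2]
        exact mul_lt_mul_of_pos_right hCw' (by positivity)
      have hrr : ρc = ρp := huniq _ ⟨⟨hρ0, hgt⟩, hFc.symm⟩
      have hCC : C = Cp := by
        refine C_inj hγ hC0 hCp ?_
        rw [← hρcdef, hrr, hρpC]
      have hVV : V = wp - 1 := by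
        rw [hrr] at hmass
        have : 1 + V = wp := by
          rw [hwpdef, eq_div_iff (ne_of_gt hρp0), mul_comm, ← hmass]
        linarith
      simp [Prod.ext_iff, hCC, hVV]
  · -- right state given, find left state
    intro Vp Cp h1 h2
    have hCp0 : Cp < 0 := by linarith
    obtain ⟨ρp, hρpdef⟩ : ∃ x, x = (-Cp) ^ (2/(γ-1)) := ⟨_, rfl⟩
    have hρp0 : (0:ℝ) < ρp := by rw [hρpdef]; exact rpow_pos_of_pos (by linarith) _
    obtain ⟨j, hjdef⟩ : ∃ x, x = ρp * (1 + Vp) := ⟨_, rfl⟩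
    have hj : j < 0 := by rw [hjdef]; exact mul_neg_of_pos_of_neg hρp0 h2
    have hj0 : j ≠ 0 := ne_of_lt hj
    have hCw : (1+Vp)^2 < Cp^2 := by nlinarith
    have hegp : ρp ^ (γ+1) = Cp^2 * ρp^2 := by rw [hρpdef]; exact rho_gp1 hγ hCp0
    have hlt : j^2 < ρp ^ (γ+1) := by
      have e2 : j^2 = (1+Vp)^2 * ρp^2 := by rw [hjdef]; ring
      rw [hegp, e2]
      exact mul_lt_mul_of_pos_right hCw (by positivity)
    obtain ⟨ρm, ⟨⟨hρm0, hρmlt⟩, hFeq⟩, huniq⟩ := core_B hγ hj0 hρp0 hlt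
    obtain ⟨Cm, hCmdef⟩ : ∃ x, x = -(ρm ^ ((γ-1)/2)) := ⟨_, rfl⟩
    have hCm : Cm < 0 := by
      have := rpow_pos_of_pos hρm0 ((γ-1)/2)
      rw [hCmdef]; linarith
    have hρmC : (-Cm) ^ (2/(γ-1)) = ρm := by
      rw [hCmdef, neg_neg]; exact C_of_rho hγ hρm0
    obtain ⟨wm, hwmdef⟩ : ∃ x, x = j / ρm := ⟨_, rfl⟩
    have hwm0 : wm < 0 := by rw [hwmdef]; exact div_neg_of_neg_of_pos hj hρm0
    have hjwm : ρm * wm = j := by rw [hwmdef]; field_simp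
    have hegm' : ρm ^ (γ+1) = Cm^2 * ρm^2 := by
      have := rho_gp1 hγ hCm
      rwa [hρmC] at this
    have hsup : Cm^2 < wm^2 := by
      have e2 : j^2 = wm^2 * ρm^2 := by rw [← hjwm]; ring
      rw [e2, hegm'] at hρmlt
      exact lt_of_mul_lt_mul_right hρmlt (by positivity)
    have hwmCm : wm < Cm := by nlinarith
    refine ⟨(wm - 1, Cm), ⟨⟨by dsimp only; linarith, by dsimp only; linarith⟩, ?_⟩, ?_⟩
    · rw [RH_iff hγ hCm hCp0, ← hρpdef, hρmC]
      have hmw : ρm * (1 + (wm - 1)) = j := by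
        rw [show 1 + (wm - 1) = wm by ring, hjwm]
      refine ⟨by rw [hmw, hjdef], ?_⟩
      rw [hmw]
      exact hFeq.trans (by rw [hjdef])
    · rintro ⟨V, C⟩ ⟨⟨hc1, hc2⟩, hRHc⟩
      dsimp only at hc1 hc2
      rw [RH_iff hγ hc2 hCp0, ← hρpdef] at hRHc
      obtain ⟨ρc, hρcdef⟩ : ∃ x, x = (-C) ^ (2/(γ-1)) := ⟨_, rfl⟩
      rw [← hρcdef] at hRHc
      obtain ⟨hmass, hFc⟩ := hRHc
      have hρ0 : (0:ℝ) < ρc := by rw [hρcdef]; exact rpow_pos_of_pos (by linarith) _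
      have hegc : ρc ^ (γ+1) = C^2 * ρc^2 := by rw [hρcdef]; exact rho_gp1 hγ hc2
      have hCw' : C^2 < (1+V)^2 := by nlinarith
      have hjc : ρc * (1+V) = j := by rw [hmass, hjdef]
      have hgt : ρc ^ (γ+1) < j^2 := by
        have e2 : j^2 = (1+V)^2 * ρc^2 := by rw [← hjc]; ring
        rw [hegc, e2]
        exact mul_lt_mul_of_pos_right hCw' (by positivity)
      have hFc' : Fq γ j ρc = Fq γ j ρp := by
        rw [← hjc]; exact hFc
      have hrr : ρc = ρm := huniq _ ⟨⟨hρ0, hgt⟩, hFc'⟩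
      have hCC : C = Cm := by
        refine C_inj hγ hc2 hCm ?_
        rw [← hρcdef, hrr, hρmC]
      have hVV : V = wm - 1 := by
        rw [hrr] at hjc
        have : 1 + V = wm := by
          rw [hwmdef, eq_div_iff (ne_of_gt hρm0), ← hjc, mul_comm]
        linarith
      simp [Prod.ext_iff, hCC, hVV]
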